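/- Let (C_k)_{k≥0} be a sequence of Laurent polynomials with integer coefficients such that there exist positive constants A, B, D with ℓ¹-norm ‖C_k‖₁ ≤ e^{A k + B log k} and support of C_k contained in [−D k², D k²] for all k ≥ 1. Define f_n(α) = ∑_{k=0}^{n} K(n,k,α) · C_k(e^{α/n}) for integers n ≥ 1 and α ∈ ℂ. Then there exist an open neighborhood U of 0 in ℂ and a positive real number M such that |f_n(α)| < M for all α ∈ U and all n ≥ 1. -/

import Mathlib

/-- The evaluation of an integer Laurent polynomial (a finitely supported function `ℤ → ℤ`)
at a complex number `q`: `∑_j a_j q^j`. -/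
noncomputable def laurentEval (c : ℤ →₀ ℤ) (q : ℂ) : ℂ :=
  ∑ j ∈ c.support, (c j : ℂ) * q ^ j

/-- The ℓ¹-norm of an integer Laurent polynomial: `∑_j |a_j|`. -/
noncomputable def laurentL1 (c : ℤ →₀ ℤ) : ℝ :=
  ∑ j ∈ c.support, |(c j : ℝ)|

/-- The evaluation of the cyclotomic kernel `C_{n,k}` at `q = e^{α/n}`:
`K(n,k,α) = ∏_{j=1}^{k} ((e^{α/2} − e^{−α/2})² − (e^{jα/(2n)} − e^{−jα/(2n)})²)`. -/
noncomputable def cycKer (n k : ℕ) (α : ℂ) : ℂ :=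
  ∏ j ∈ Finset.Icc 1 k,
    ((Complex.exp (α / 2) - Complex.exp (-α / 2)) ^ 2
      - (Complex.exp ((j : ℂ) * α / (2 * n)) - Complex.exp (-((j : ℂ) * α / (2 * n)))) ^ 2)

set_option maxHeartbeats 1000000

lemma aux_exp_sub (z : ℂ) (hz : ‖z‖ ≤ 1) :
    ‖Complex.exp z - Complex.exp (-z)‖ ≤ 4 * ‖z‖ := by
  have h1 := Complex.norm_exp_sub_one_le hz
  have h2 : ‖Complex.exp (-z) - 1‖ ≤ 2 * ‖z‖ := by
    have := Complex.norm_exp_sub_one_le (x := -z) (by simpa using hz)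
    simpa using this
  have h3 : Complex.exp z - Complex.exp (-z)
      = (Complex.exp z - 1) - (Complex.exp (-z) - 1) := by ring
  rw [h3]
  calc ‖(Complex.exp z - 1) - (Complex.exp (-z) - 1)‖
      ≤ ‖Complex.exp z - 1‖ + ‖Complex.exp (-z) - 1‖ := by
        simpa using norm_sub_le (Complex.exp z - 1) (Complex.exp (-z) - 1)
    _ ≤ 2 * ‖z‖ + 2 * ‖z‖ := add_le_add h1 h2
    _ = 4 * ‖z‖ := by ring

lemma cycKer_bound {n k : ℕ} (hk : k ≤ n) (hn : 1 ≤ n) {α : ℂ} (hα : ‖α‖ ≤ 1) :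
    ‖cycKer n k α‖ ≤ (8 * ‖α‖ ^ 2) ^ k := by
  have hn' : (0:ℝ) < n := by exact_mod_cast hn
  rw [cycKer, norm_prod]
  have hbd : ∀ j ∈ Finset.Icc 1 k,
      ‖(Complex.exp (α / 2) - Complex.exp (-α / 2)) ^ 2
        - (Complex.exp ((j : ℂ) * α / (2 * n)) - Complex.exp (-((j : ℂ) * α / (2 * n)))) ^ 2‖
      ≤ 8 * ‖α‖ ^ 2 := by
    intro j hj
    rw [Finset.mem_Icc] at hj
    have hjn : (j : ℝ) ≤ n := by exact_mod_cast hj.2.trans hk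
    -- first factor
    have hx : ‖Complex.exp (α / 2) - Complex.exp (-α / 2)‖ ≤ 2 * ‖α‖ := by
      have h := aux_exp_sub (α / 2) (by
        rw [norm_div]
        simp only [Complex.norm_ofNat]
        linarith [norm_nonneg α])
      have : -α / 2 = -(α / 2) := by ring
      rw [this]
      calc ‖Complex.exp (α / 2) - Complex.exp (-(α / 2))‖
          ≤ 4 * ‖α / 2‖ := h
        _ = 2 * ‖α‖ := by rw [norm_div]; simp; ring
    have habsj : ‖(j : ℂ) * α / (2 * n)‖ = j * ‖α‖ / (2 * n) := by
      rw [norm_div, norm_mul, norm_mul]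
      simp [Complex.norm_natCast]
    have hyle : ‖(j : ℂ) * α / (2 * n)‖ ≤ ‖α‖ / 2 := by
      rw [habsj, div_le_div_iff₀ (by positivity) (by norm_num)]
      have : (j:ℝ) * ‖α‖ ≤ n * ‖α‖ :=
        mul_le_mul_of_nonneg_right hjn (norm_nonneg _)
      nlinarith
    have hy : ‖Complex.exp ((j : ℂ) * α / (2 * n))
        - Complex.exp (-((j : ℂ) * α / (2 * n)))‖ ≤ 2 * ‖α‖ := by
      have h := aux_exp_sub ((j : ℂ) * α / (2 * n)) (by linarith)
      calc ‖_‖ ≤ 4 * ‖(j : ℂ) * α / (2 * n)‖ := h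
        _ ≤ 4 * (‖α‖ / 2) := by linarith
        _ = 2 * ‖α‖ := by ring
    calc ‖(Complex.exp (α / 2) - Complex.exp (-α / 2)) ^ 2
          - (Complex.exp ((j : ℂ) * α / (2 * n)) - Complex.exp (-((j : ℂ) * α / (2 * n)))) ^ 2‖
        ≤ ‖Complex.exp (α / 2) - Complex.exp (-α / 2)‖ ^ 2
          + ‖Complex.exp ((j : ℂ) * α / (2 * n))
              - Complex.exp (-((j : ℂ) * α / (2 * n)))‖ ^ 2 := by
          have h := norm_sub_le
            ((Complex.exp (α / 2) - Complex.exp (-α / 2)) ^ 2)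
            ((Complex.exp ((j : ℂ) * α / (2 * n)) - Complex.exp (-((j : ℂ) * α / (2 * n)))) ^ 2)
          rw [norm_pow, norm_pow] at h
          exact h
      _ ≤ (2 * ‖α‖) ^ 2 + (2 * ‖α‖) ^ 2 := by
          exact add_le_add (pow_le_pow_left₀ (norm_nonneg _) hx 2)
            (pow_le_pow_left₀ (norm_nonneg _) hy 2)
      _ = 8 * ‖α‖ ^ 2 := by ring
  calc (∏ j ∈ Finset.Icc 1 k, ‖_‖)
      ≤ ∏ _j ∈ Finset.Icc 1 k, (8 * ‖α‖ ^ 2) :=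
        Finset.prod_le_prod (fun j _ => norm_nonneg _) hbd
    _ = (8 * ‖α‖ ^ 2) ^ k := by
        rw [Finset.prod_const, Nat.card_Icc, Nat.add_sub_cancel]

lemma laurentEval_bound (c : ℤ →₀ ℤ) (α : ℂ) (n : ℕ) (hn : 1 ≤ n) (R : ℝ)
    (hR : ∀ j ∈ c.support, |(j : ℝ)| * ‖α‖ / n ≤ R) :
    ‖laurentEval c (Complex.exp (α / n))‖ ≤ laurentL1 c * Real.exp R := by
  rw [laurentEval, laurentL1, Finset.sum_mul]
  calc ‖∑ j ∈ c.support, (c j : ℂ) * Complex.exp (α / n) ^ j‖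
      ≤ ∑ j ∈ c.support, ‖(c j : ℂ) * Complex.exp (α / n) ^ j‖ := by
        simpa using
          norm_sum_le c.support (fun j => (c j : ℂ) * Complex.exp (α / n) ^ j)
    _ ≤ ∑ j ∈ c.support, |(c j : ℝ)| * Real.exp R := by
        apply Finset.sum_le_sum
        intro j hj
        rw [norm_mul]
        have h1 : ‖(c j : ℂ)‖ = |(c j : ℝ)| := by
          rw [Complex.norm_intCast]
        rw [h1]
        apply mul_le_mul_of_nonneg_left _ (abs_nonneg _)
        have h2 : Complex.exp (α / n) ^ j = Complex.exp ((j : ℂ) * (α / n)) := by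
          rw [Complex.exp_int_mul]
        rw [h2, Complex.norm_exp]
        apply Real.exp_le_exp.2
        calc ((j : ℂ) * (α / n)).re ≤ ‖(j : ℂ) * (α / n)‖ := Complex.re_le_norm _
          _ = |(j : ℝ)| * ‖α‖ / n := by
              rw [norm_mul, norm_div, Complex.norm_intCast, Complex.norm_natCast]
              ring
          _ ≤ R := hR j hj

/-- If `(C_k)` is a sequence of integer Laurent polynomials with
`‖C_k‖₁ ≤ e^{A k + B log k}` and support contained in `[−D k², D k²]` for all `k ≥ 1`,
and `f_n(α) = ∑_{k=0}^{n} K(n,k,α) · C_k(e^{α/n})`, then there exist an open neighborhood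
`U` of `0` in `ℂ` and `M > 0` with `|f_n(α)| < M` for all `α ∈ U` and `n ≥ 1`. -/
theorem colored_jones_uniform_bound (C : ℕ → (ℤ →₀ ℤ)) (A B D : ℝ)
    (hA : 0 < A) (hB : 0 < B) (hD : 0 < D)
    (hnorm : ∀ k : ℕ, 1 ≤ k → laurentL1 (C k) ≤ Real.exp (A * k + B * Real.log k))
    (hsupp : ∀ k : ℕ, 1 ≤ k → ∀ j ∈ (C k).support, |(j : ℝ)| ≤ D * (k : ℝ) ^ 2)
    (f : ℕ → ℂ → ℂ)
    (hf : ∀ n : ℕ, ∀ α : ℂ,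
      f n α = ∑ k ∈ Finset.range (n + 1), cycKer n k α * laurentEval (C k) (Complex.exp (α / n))) :
    ∃ U : Set ℂ, IsOpen U ∧ 0 ∈ U ∧ ∃ M : ℝ, 0 < M ∧
      ∀ α ∈ U, ∀ n : ℕ, 1 ≤ n → ‖f n α‖ < M := by
  obtain ⟨E, hE⟩ : ∃ x : ℝ, x = Real.exp (A + B + D) := ⟨_, rfl⟩
  have hEpos : 0 < E := hE ▸ Real.exp_pos _
  obtain ⟨ε, hε⟩ : ∃ x : ℝ, x = min 1 (1 / (16 * E)) := ⟨_, rfl⟩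
  have hεpos : 0 < ε := by
    rw [hε]
    exact lt_min one_pos (div_pos one_pos (by linarith))
  have hε1 : ε ≤ 1 := hε ▸ min_le_left _ _
  have hε2 : ε ≤ 1 / (16 * E) := hε ▸ min_le_right _ _
  set M0 : ℝ := ∑ j ∈ (C 0).support, |((C 0) j : ℝ)| * Real.exp |(j : ℝ)| with hM0
  have hM0nonneg : 0 ≤ M0 := Finset.sum_nonneg fun j _ => by positivity
  refine ⟨Metric.ball 0 ε, Metric.isOpen_ball, Metric.mem_ball_self hεpos, M0 + 2, by linarith, ?_⟩
  intro α hα n hn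
  have hαε : ‖α‖ < ε := by
    simpa [Complex.dist_eq] using hα
  have hα1 : ‖α‖ ≤ 1 := le_of_lt (lt_of_lt_of_le hαε hε1)
  have hαnn : 0 ≤ ‖α‖ := norm_nonneg _
  have hn' : (1:ℝ) ≤ n := by exact_mod_cast hn
  have hnpos : (0:ℝ) < n := by linarith
  rw [hf]
  -- bound each term
  have hterm : ∀ k : ℕ, 1 ≤ k → k ≤ n →
      ‖cycKer n k α * laurentEval (C k) (Complex.exp (α / n))‖
        ≤ (1/2 : ℝ) ^ k := by
    intro k hk1 hkn
    have hk' : (1:ℝ) ≤ k := by exact_mod_cast hk1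
    have hkn' : (k:ℝ) ≤ n := by exact_mod_cast hkn
    rw [norm_mul]
    have h1 := cycKer_bound hkn hn hα1
    have h2 : ‖laurentEval (C k) (Complex.exp (α / n))‖
        ≤ laurentL1 (C k) * Real.exp (D * k) := by
      apply laurentEval_bound (C k) α n hn
      intro j hj
      have hj' := hsupp k hk1 j hj
      rw [div_le_iff₀ hnpos]
      have hjabs : |(j : ℝ)| * ‖α‖ ≤ D * (k:ℝ)^2 := by
        have h' : |(j:ℝ)| * ‖α‖ ≤ |(j:ℝ)| := by
          nlinarith [abs_nonneg ((j:ℝ))]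
        exact h'.trans hj'
      have hkk : D * (k:ℝ) * (k:ℝ) ≤ D * (k:ℝ) * n :=
        mul_le_mul_of_nonneg_left hkn' (by positivity)
      nlinarith
    have h3 : laurentL1 (C k) * Real.exp (D * k) ≤ Real.exp ((A + B + D) * k) := by
      calc laurentL1 (C k) * Real.exp (D * k)
          ≤ Real.exp (A * k + B * Real.log k) * Real.exp (D * k) := by
            apply mul_le_mul_of_nonneg_right (hnorm k hk1) (Real.exp_pos _).le
        _ = Real.exp (A * k + B * Real.log k + D * k) := by rw [← Real.exp_add]
        _ ≤ Real.exp ((A + B + D) * k) := by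
            apply Real.exp_le_exp.2
            have hlog : Real.log k ≤ k := by
              have := Real.log_le_sub_one_of_pos (by linarith : (0:ℝ) < k)
              linarith
            nlinarith
    calc ‖cycKer n k α‖ * ‖laurentEval (C k) (Complex.exp (α / n))‖
        ≤ (8 * ‖α‖ ^ 2) ^ k * Real.exp ((A + B + D) * k) := by
          apply mul_le_mul h1 (h2.trans h3) (norm_nonneg _) (by positivity)
      _ = (8 * ‖α‖ ^ 2) ^ k * E ^ k := by
          rw [hE, ← Real.exp_nat_mul, mul_comm ((k:ℝ)) (A + B + D)]
      _ = (8 * ‖α‖ ^ 2 * E) ^ k := (mul_pow _ _ _).symm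
      _ ≤ (1/2 : ℝ) ^ k := by
          apply pow_le_pow_left₀ (mul_nonneg (by positivity) hEpos.le)
          have : ‖α‖ ^ 2 ≤ ε := by
            calc ‖α‖ ^ 2 ≤ ‖α‖ * 1 := by nlinarith
              _ ≤ ε := by nlinarith
          have hE0 : E ≠ 0 := ne_of_gt hEpos
          calc 8 * ‖α‖ ^ 2 * E ≤ 8 * ε * E := by nlinarith
            _ ≤ 8 * (1 / (16 * E)) * E := by
                nlinarith [mul_le_mul_of_nonneg_left hε2 (by linarith : (0:ℝ) ≤ 8 * E)]
            _ = 1/2 := by field_simp; ring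
  -- the k = 0 term
  have h0 : ‖cycKer n 0 α * laurentEval (C 0) (Complex.exp (α / n))‖ ≤ M0 := by
    have hker : cycKer n 0 α = 1 := by simp [cycKer]
    rw [hker, one_mul, laurentEval, hM0]
    calc ‖∑ j ∈ (C 0).support, ((C 0) j : ℂ) * Complex.exp (α / n) ^ j‖
        ≤ ∑ j ∈ (C 0).support, ‖((C 0) j : ℂ) * Complex.exp (α / n) ^ j‖ := by
          simpa using
            norm_sum_le (C 0).support (fun j => ((C 0) j : ℂ) * Complex.exp (α / n) ^ j)
      _ ≤ ∑ j ∈ (C 0).support, |((C 0) j : ℝ)| * Real.exp |(j : ℝ)| := by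
          apply Finset.sum_le_sum
          intro j hj
          rw [norm_mul]
          have h1 : ‖((C 0) j : ℂ)‖ = |((C 0) j : ℝ)| := by
            rw [Complex.norm_intCast]
          rw [h1]
          apply mul_le_mul_of_nonneg_left _ (abs_nonneg _)
          have h2 : Complex.exp (α / n) ^ j = Complex.exp ((j : ℂ) * (α / n)) := by
            rw [Complex.exp_int_mul]
          rw [h2, Complex.norm_exp]
          apply Real.exp_le_exp.2
          calc ((j : ℂ) * (α / n)).re ≤ ‖(j : ℂ) * (α / n)‖ := Complex.re_le_norm _
            _ = |(j : ℝ)| * ‖α‖ / n := by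
                rw [norm_mul, norm_div, Complex.norm_intCast, Complex.norm_natCast]; ring
            _ ≤ |(j : ℝ)| := by
                rw [div_le_iff₀ hnpos]
                nlinarith [abs_nonneg ((j:ℝ))]
  -- combine
  have hsum : ‖∑ k ∈ Finset.range (n + 1),
      cycKer n k α * laurentEval (C k) (Complex.exp (α / n))‖ ≤ M0 + 1 := by
    calc ‖∑ k ∈ Finset.range (n + 1),
            cycKer n k α * laurentEval (C k) (Complex.exp (α / n))‖
        ≤ ∑ k ∈ Finset.range (n + 1),
            ‖cycKer n k α * laurentEval (C k) (Complex.exp (α / n))‖ := by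
          simpa using
            norm_sum_le (Finset.range (n+1))
              (fun k => cycKer n k α * laurentEval (C k) (Complex.exp (α / n)))
      _ = (∑ k ∈ Finset.range n,
            ‖cycKer n (k+1) α * laurentEval (C (k+1)) (Complex.exp (α / n))‖)
          + ‖cycKer n 0 α * laurentEval (C 0) (Complex.exp (α / n))‖ :=
          Finset.sum_range_succ' _ n
      _ ≤ (∑ k ∈ Finset.range n, (1/2:ℝ) ^ (k+1)) + M0 := by
          apply add_le_add _ h0
          apply Finset.sum_le_sum
          intro k hk
          exact hterm (k+1) (Nat.succ_le_succ (Nat.zero_le _))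
            (Nat.succ_le_of_lt (Finset.mem_range.1 hk))
      _ ≤ 1 + M0 := by
          apply add_le_add_left _ M0
          calc ∑ k ∈ Finset.range n, (1/2:ℝ) ^ (k+1)
              = (1/2) * ∑ k ∈ Finset.range n, (1/2:ℝ) ^ k := by
                rw [Finset.mul_sum]
                apply Finset.sum_congr rfl
                intro k _
                ring
            _ ≤ (1/2) * 2 := by
                apply mul_le_mul_of_nonneg_left (sum_geometric_two_le n) (by norm_num)
            _ = 1 := by norm_num
      _ = M0 + 1 := by ring
  linarith
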